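/- For the merge model M_r(t,x,y,z) = (t, x³ + 3(r − t²)x + y² − z²) with r ∈ [−1,1], the critical locus is {(t,x,0,0) : t² − x² = r}. For r ≠ 0 it is a smooth hyperbola admitting the parametrization {½(α + r/α, α − r/α, 0, 0) : α ∈ ℝ \ {0}}; for r = 0 it is the union of the diagonal and antidiagonal in the (t,x)-plane; and for r > 0 the map M_r has exactly two cusp points, located at (±√r, 0, 0, 0), all other critical points being fold points. -/

import Mathlib

noncomputable section

/-- The merge model `M_r(t,x,y,z) = (t, x³ + 3(r − t²)x + y² − z²)`. -/
def Mr (r : ℝ) : (Fin 4 → ℝ) → (Fin 2 → ℝ) := fun p =>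
  ![p 0, (p 1) ^ 3 + 3 * (r - (p 0) ^ 2) * p 1 + (p 2) ^ 2 - (p 3) ^ 2]

/-- The critical locus of `M_r`: points where the differential has rank `< 2`. -/
def CritMr (r : ℝ) : Set (Fin 4 → ℝ) :=
  {p | ¬ Function.Surjective (fderiv ℝ (Mr r) p)}

/-- The parametrization `α ↦ ½(α + r/α, α − r/α, 0, 0)` of the critical
hyperbola. -/
def γpar (r α : ℝ) : Fin 4 → ℝ := ![(α + r / α) / 2, (α - r / α) / 2, 0, 0]

open ContinuousLinearMap in
lemma Mr_fderiv_apply (r : ℝ) (p v : Fin 4 → ℝ) :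
    fderiv ℝ (Mr r) p v =
      ![v 0, (-(6 * p 0 * p 1)) * v 0 + (3 * (p 1) ^ 2 + 3 * (r - (p 0) ^ 2)) * v 1
          + (2 * p 2) * v 2 + (-(2 * p 3)) * v 3] := by
  have hp0 : HasFDerivAt (fun q : Fin 4 → ℝ => q 0) ((proj 0 : (Fin 4 → ℝ) →L[ℝ] ℝ)) p :=
    hasFDerivAt_apply (𝕜 := ℝ) (F' := fun _ : Fin 4 => ℝ) 0 p
  have hp1 : HasFDerivAt (fun q : Fin 4 → ℝ => q 1) ((proj 1 : (Fin 4 → ℝ) →L[ℝ] ℝ)) p :=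
    hasFDerivAt_apply (𝕜 := ℝ) (F' := fun _ : Fin 4 => ℝ) 1 p
  have hp2 : HasFDerivAt (fun q : Fin 4 → ℝ => q 2) ((proj 2 : (Fin 4 → ℝ) →L[ℝ] ℝ)) p :=
    hasFDerivAt_apply (𝕜 := ℝ) (F' := fun _ : Fin 4 => ℝ) 2 p
  have hp3 : HasFDerivAt (fun q : Fin 4 → ℝ => q 3) ((proj 3 : (Fin 4 → ℝ) →L[ℝ] ℝ)) p :=
    hasFDerivAt_apply (𝕜 := ℝ) (F' := fun _ : Fin 4 => ℝ) 3 p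
  have h1 : HasFDerivAt
      (fun q : Fin 4 → ℝ => (q 1) ^ 3 + 3 * (r - (q 0) ^ 2) * q 1 + (q 2) ^ 2 - (q 3) ^ 2)
      ((-(6 * p 0 * p 1)) • (proj 0 : (Fin 4 → ℝ) →L[ℝ] ℝ)
        + (3 * (p 1) ^ 2 + 3 * (r - (p 0) ^ 2)) • proj 1
        + (2 * p 2) • proj 2 + (-(2 * p 3)) • proj 3) p := by
    have heq : (fun q : Fin 4 → ℝ =>
        (q 1) ^ 3 + 3 * (r - (q 0) ^ 2) * q 1 + (q 2) ^ 2 - (q 3) ^ 2)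
        = fun q : Fin 4 → ℝ =>
          q 1 * q 1 * q 1 + 3 * (r - q 0 * q 0) * q 1 + q 2 * q 2 - q 3 * q 3 := by
      funext q; ring
    rw [heq]
    have h := (((((hp1.mul hp1).mul hp1)).add
        ((((hasFDerivAt_const r p).sub (hp0.mul hp0)).const_mul 3).mul hp1)).add
        (hp2.mul hp2)).sub (hp3.mul hp3)
    refine h.congr_fderiv ?_
    refine ContinuousLinearMap.ext fun v => ?_
    simp [proj_apply]
    ring
  have hMr : Mr r = fun (q : Fin 4 → ℝ) (i : Fin 2) =>
      (![fun q : Fin 4 → ℝ => q 0,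
         fun q : Fin 4 → ℝ => (q 1) ^ 3 + 3 * (r - (q 0) ^ 2) * q 1 + (q 2) ^ 2 - (q 3) ^ 2] :
        Fin 2 → (Fin 4 → ℝ) → ℝ) i q := by
    funext q i
    fin_cases i <;> rfl
  have hM : HasFDerivAt (Mr r)
      (ContinuousLinearMap.pi ![
        (proj 0 : (Fin 4 → ℝ) →L[ℝ] ℝ),
        (-(6 * p 0 * p 1)) • (proj 0 : (Fin 4 → ℝ) →L[ℝ] ℝ)
          + (3 * (p 1) ^ 2 + 3 * (r - (p 0) ^ 2)) • proj 1
          + (2 * p 2) • proj 2 + (-(2 * p 3)) • proj 3]) p := by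
    rw [hMr]
    exact hasFDerivAt_pi.2 (fun i => by fin_cases i <;> simpa using ‹_›)
  rw [hM.fderiv]
  funext i
  fin_cases i <;> simp [proj_apply]

lemma crit_eq (r : ℝ) :
    CritMr r = {p | (p 0) ^ 2 - (p 1) ^ 2 = r ∧ p 2 = 0 ∧ p 3 = 0} := by
  ext p
  simp only [CritMr, Set.mem_setOf_eq]
  constructor
  · intro hns
    have h2 : p 2 = 0 := by
      by_contra h2
      apply hns
      intro w
      refine ⟨![w 0, 0, (w 1 - (-(6 * p 0 * p 1)) * w 0) / (2 * p 2), 0], ?_⟩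
      rw [Mr_fderiv_apply]
      funext i
      fin_cases i
      · simp
      · simp only [Matrix.cons_val_zero, Matrix.cons_val_one, Matrix.head_cons,
          Matrix.cons_val_two, Matrix.tail_cons, Matrix.cons_val_three, Fin.mk_one]
        field_simp
        ring
    have h3 : p 3 = 0 := by
      by_contra h3
      apply hns
      intro w
      refine ⟨![w 0, 0, 0, (w 1 - (-(6 * p 0 * p 1)) * w 0) / (-(2 * p 3))], ?_⟩
      rw [Mr_fderiv_apply]
      funext i
      fin_cases i
      · simp
      · simp only [Matrix.cons_val_zero, Matrix.cons_val_one, Matrix.head_cons,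
          Matrix.cons_val_two, Matrix.tail_cons, Matrix.cons_val_three, Fin.mk_one]
        field_simp
        ring
    refine ⟨?_, h2, h3⟩
    by_contra h1
    have hb : 3 * (p 1) ^ 2 + 3 * (r - (p 0) ^ 2) ≠ 0 := fun h =>
      h1 (by linear_combination (-1/3 : ℝ) * h)
    apply hns
    intro w
    refine ⟨![w 0, (w 1 - (-(6 * p 0 * p 1)) * w 0) / (3 * (p 1) ^ 2 + 3 * (r - (p 0) ^ 2)),
      0, 0], ?_⟩
    rw [Mr_fderiv_apply]
    funext i
    fin_cases i
    · simp
    · simp only [Matrix.cons_val_zero, Matrix.cons_val_one, Matrix.head_cons,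
        Matrix.cons_val_two, Matrix.tail_cons, Matrix.cons_val_three, Fin.mk_one]
      field_simp
      have hb' : p 1 ^ 2 + (r - p 0 ^ 2) ≠ 0 := fun h => hb (by linear_combination 3 * h)
      rw [mul_div_cancel_left₀ _ hb']; ring
  · rintro ⟨h1, h2, h3⟩ hs
    obtain ⟨v, hv⟩ := hs ![0, 1]
    rw [Mr_fderiv_apply] at hv
    have h0 := congrFun hv 0
    have hone := congrFun hv 1
    simp at h0 hone
    have hb : 3 * (p 1) ^ 2 + 3 * (r - (p 0) ^ 2) = 0 := by linear_combination -3 * h1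
    rw [h0, hb, h2, h3] at hone
    simp at hone

/--
For `r ∈ [−1,1]`: the critical locus of `M_r` is
`{(t,x,0,0) : t² − x² = r}`; for `r ≠ 0` it is parametrized by
`α ↦ ½(α + r/α, α − r/α, 0, 0)` (`α ≠ 0`); for `r = 0` it is the union of the
diagonal and antidiagonal of the `(t,x)`-plane; and for `r > 0` the restriction
of `M_r` to its critical locus (in the above parametrization) has vanishing
derivative exactly at `α = ±√r`, i.e. the two points `(±√r, 0, 0, 0)` are the
only cusp points and all other critical points are fold points.
-/
theorem merge_model_critical_locus (r : ℝ) (hr : r ∈ Set.Icc (-1 : ℝ) 1) :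
    CritMr r = {p | (p 0) ^ 2 - (p 1) ^ 2 = r ∧ p 2 = 0 ∧ p 3 = 0} ∧
    (r ≠ 0 → CritMr r = {p | ∃ α : ℝ, α ≠ 0 ∧ p = γpar r α}) ∧
    (r = 0 → CritMr r = {p | (p 0 = p 1 ∨ p 0 = -(p 1)) ∧ p 2 = 0 ∧ p 3 = 0}) ∧
    (0 < r → ∀ α : ℝ, α ≠ 0 →
        (deriv (fun a : ℝ => Mr r (γpar r a)) α = 0 ↔
          α = Real.sqrt r ∨ α = -(Real.sqrt r))) ∧
    (0 < r → γpar r (Real.sqrt r) = ![Real.sqrt r, 0, 0, 0] ∧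
        γpar r (-(Real.sqrt r)) = ![-(Real.sqrt r), 0, 0, 0]) := by
  refine ⟨crit_eq r, ?_, ?_, ?_, ?_⟩
  · -- r ≠ 0 : hyperbola parametrization
    intro hr0
    rw [crit_eq r]
    ext p
    simp only [Set.mem_setOf_eq]
    constructor
    · rintro ⟨h1, h2, h3⟩
      have hα : p 0 + p 1 ≠ 0 := by
        intro h0
        apply hr0
        rw [← h1]
        have : p 0 = -(p 1) := by linarith
        rw [this]; ring
      refine ⟨p 0 + p 1, hα, ?_⟩
      have hdiv : r / (p 0 + p 1) = p 0 - p 1 := by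
        rw [div_eq_iff hα, ← h1]; ring
      funext i
      fin_cases i <;> simp [γpar, hdiv, h2, h3] <;> ring
    · rintro ⟨α, hα, rfl⟩
      refine ⟨?_, by simp [γpar], by simp [γpar]⟩
      show ((α + r / α) / 2) ^ 2 - ((α - r / α) / 2) ^ 2 = r
      field_simp
      ring
  · -- r = 0 : diagonal ∪ antidiagonal
    rintro rfl
    rw [crit_eq 0]
    ext p
    simp only [Set.mem_setOf_eq]
    constructor
    · rintro ⟨h1, h2, h3⟩
      refine ⟨?_, h2, h3⟩
      have h : (p 0 - p 1) * (p 0 + p 1) = 0 := by linear_combination h1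
      rcases mul_eq_zero.1 h with h | h
      · exact Or.inl (by linarith)
      · exact Or.inr (by linarith)
    · rintro ⟨h1 | h1, h2, h3⟩ <;> exact ⟨by rw [h1]; ring, h2, h3⟩
  · -- 0 < r : vanishing of the derivative of the restricted map
    intro hrpos α hα
    have hdiv : HasDerivAt (fun a : ℝ => r / a) ((0 * α - r * 1) / α ^ 2) α :=
      (hasDerivAt_const α r).div (hasDerivAt_id α) hα
    have ht : HasDerivAt (fun a : ℝ => (a + r / a) / 2)
        ((1 + (0 * α - r * 1) / α ^ 2) / 2) α := ((hasDerivAt_id α).add hdiv).div_const 2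
    have hx : HasDerivAt (fun a : ℝ => (a - r / a) / 2)
        ((1 - (0 * α - r * 1) / α ^ 2) / 2) α := ((hasDerivAt_id α).sub hdiv).div_const 2
    have hc1 := (((hx.pow 3).add
        (((((hasDerivAt_const α r).sub (ht.pow 2)).const_mul 3)).mul hx)).add
        (hasDerivAt_const α ((0:ℝ) ^ 2))).sub (hasDerivAt_const α ((0:ℝ) ^ 2))
    set t' : ℝ := (1 + (0 * α - r * 1) / α ^ 2) / 2 with ht'def
    set x' : ℝ := (1 - (0 * α - r * 1) / α ^ 2) / 2 with hx'def
    set D1 : ℝ := (↑3 * ((α - r / α) / 2) ^ (3 - 1) * x' +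
        (3 * (0 - ↑2 * ((α + r / α) / 2) ^ (2 - 1) * t') * ((α - r / α) / 2)
          + 3 * (r - ((α + r / α) / 2) ^ 2) * x') + 0 - 0) with hD1
    have hF : HasDerivAt (fun a : ℝ => Mr r (γpar r a)) (![t', D1]) α := by
      refine hasDerivAt_pi.2 fun i => ?_
      fin_cases i
      · exact ht
      · exact hc1
    rw [hF.deriv]
    have hsq : (![t', D1] = (0 : Fin 2 → ℝ)) ↔ α ^ 2 = r := by
      constructor
      · intro h
        have h0 := congrFun h 0
        simp [ht'def] at h0
        field_simp at h0
        linarith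
      · intro h
        have hr' : r = α ^ 2 := h.symm
        subst hr'
        funext i
        fin_cases i
        · simp [ht'def]
          field_simp
          norm_num
        · simp [hD1, ht'def, hx'def]
          field_simp
          ring
    rw [hsq]
    constructor
    · intro h
      have habs : Real.sqrt r = |α| := by rw [← h, Real.sqrt_sq_eq_abs]
      rcases abs_cases α with ⟨h1, _⟩ | ⟨h1, _⟩
      · exact Or.inl (by rw [habs, h1])
      · exact Or.inr (by rw [habs, h1]; ring)
    · rintro (rfl | rfl)
      · exact Real.sq_sqrt hrpos.le
      · rw [neg_pow]; simp [Real.sq_sqrt hrpos.le]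
  · -- the two cusp points
    intro hrpos
    have h1 : r / Real.sqrt r = Real.sqrt r := Real.div_sqrt
    constructor <;> funext i <;> fin_cases i <;>
      simp [γpar, div_neg, h1] <;> ring
end
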